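/- For every integer n ≥ 1 and every constant c ∈ ℝ, the Vandermonde determinant Δ(x) = ∏_{1 ≤ i < j ≤ n} (x_i − x_j) satisfies L Δ = 0 on ℝ^n, where L = ∑_{i=1}^n (2 x_i ∂_i² + c ∂_i) is the generator of n independent squared Bessel processes. -/

import Mathlib

open Finset Polynomial

noncomputable def pd {n : ℕ} (i : Fin n) (f : (Fin n → ℝ) → ℝ) (x : Fin n → ℝ) : ℝ :=
  deriv (fun t => f (Function.update x i t)) (x i)

noncomputable def vd {n : ℕ} (x : Fin n → ℝ) : ℝ :=
  ∏ i : Fin n, ∏ j ∈ Finset.Ioi i, (x i - x j)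


variable {n : ℕ}

/-- The constant (in the i-th coordinate) factor of vd. -/
noncomputable def Kc (i : Fin n) (y : Fin n → ℝ) : ℝ :=
  (∏ _a ∈ Finset.Iio i, (-1:ℝ)) *
    ∏ a ∈ Finset.univ.erase i, ∏ b ∈ (Finset.Ioi a).erase i, (y a - y b)

lemma Kc_update (i : Fin n) (x : Fin n → ℝ) (t : ℝ) :
    Kc i (Function.update x i t) = Kc i x := by
  unfold Kc
  congr 1
  refine Finset.prod_congr rfl fun a ha => Finset.prod_congr rfl fun b hb => ?_
  rw [Function.update_of_ne (Finset.mem_erase.mp ha).1,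
    Function.update_of_ne (Finset.mem_erase.mp hb).1]

lemma vd_eq_K (i : Fin n) (y : Fin n → ℝ) :
    vd y = Kc i y * ∏ j ∈ Finset.univ.erase i, (y i - y j) := by
  unfold vd Kc
  rw [← Finset.mul_prod_erase Finset.univ _ (Finset.mem_univ i)]
  have h1 : ∀ a ∈ Finset.univ.erase i, ∏ b ∈ Finset.Ioi a, (y a - y b) =
      (if a < i then (y a - y i) else 1) * ∏ b ∈ (Finset.Ioi a).erase i, (y a - y b) := by
    intro a _
    by_cases h : a < i
    · rw [if_pos h, Finset.mul_prod_erase (Finset.Ioi a) (fun b => y a - y b) (Finset.mem_Ioi.mpr h)]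
    · rw [if_neg h, one_mul, Finset.erase_eq_of_notMem (by simp [h])]
  rw [Finset.prod_congr rfl h1, Finset.prod_mul_distrib]
  have h2 : ∏ a ∈ Finset.univ.erase i, (if a < i then (y a - y i) else 1) =
      ∏ a ∈ Finset.Iio i, (y a - y i) := by
    rw [← Finset.prod_filter]
    congr 1
    ext a
    simp only [Finset.mem_filter, Finset.mem_erase, Finset.mem_univ, Finset.mem_Iio, true_and,
      and_true]
    exact ⟨fun h => h.2, fun h => ⟨ne_of_lt h, h⟩⟩
  have h3 : ∏ a ∈ Finset.Iio i, (y a - y i) =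
      (∏ _a ∈ Finset.Iio i, (-1:ℝ)) * ∏ a ∈ Finset.Iio i, (y i - y a) := by
    rw [← Finset.prod_mul_distrib]
    exact Finset.prod_congr rfl fun a _ => by ring
  have h4 : ∏ j ∈ Finset.univ.erase i, (y i - y j) =
      (∏ a ∈ Finset.Iio i, (y i - y a)) * ∏ b ∈ Finset.Ioi i, (y i - y b) := by
    rw [← Finset.prod_union (by
      refine Finset.disjoint_left.mpr fun j hj hj' => ?_
      exact absurd (Finset.mem_Ioi.mp hj') (not_lt.mpr (le_of_lt (Finset.mem_Iio.mp hj))))]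
    congr 1
    ext j
    simp only [Finset.mem_union, Finset.mem_Iio, Finset.mem_Ioi, Finset.mem_erase,
      Finset.mem_univ, and_true]
    exact ⟨fun h => lt_or_gt_of_ne h, fun h => h.elim ne_of_lt (fun h' => (ne_of_lt h').symm)⟩
  rw [h2, h3, h4]
  ring
noncomputable def Rp (x : Fin n → ℝ) (i : Fin n) : Polynomial ℝ :=
  ∏ j ∈ Finset.univ.erase i, (Polynomial.X - Polynomial.C (x j))

lemma Rp_update (x : Fin n → ℝ) (i : Fin n) (t : ℝ) :
    Rp (Function.update x i t) i = Rp x i := by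
  unfold Rp
  refine Finset.prod_congr rfl fun j hj => ?_
  rw [Function.update_of_ne (Finset.mem_erase.mp hj).1]

lemma vd_update (i : Fin n) (x : Fin n → ℝ) (t : ℝ) :
    vd (Function.update x i t) = Polynomial.eval t (Polynomial.C (Kc i x) * Rp x i) := by
  rw [vd_eq_K i, Kc_update]
  rw [Polynomial.eval_mul, Polynomial.eval_C]
  congr 1
  unfold Rp
  rw [Polynomial.eval_prod]
  refine Finset.prod_congr rfl fun j hj => ?_
  rw [Polynomial.eval_sub, Polynomial.eval_X, Polynomial.eval_C,
    Function.update_self, Function.update_of_ne (Finset.mem_erase.mp hj).1]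

lemma pd_vd (i : Fin n) (x : Fin n → ℝ) :
    pd i vd x = Polynomial.eval (x i)
      (Polynomial.derivative (Polynomial.C (Kc i x) * Rp x i)) := by
  unfold pd
  rw [show (fun t => vd (Function.update x i t)) =
      fun t => Polynomial.eval t (Polynomial.C (Kc i x) * Rp x i) from
    funext fun t => vd_update i x t]
  exact Polynomial.deriv _

lemma pd_pd_vd (i : Fin n) (x : Fin n → ℝ) :
    pd i (pd i vd) x = Polynomial.eval (x i)
      (Polynomial.derivative (Polynomial.derivative (Polynomial.C (Kc i x) * Rp x i))) := by
  conv_lhs => rw [pd]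
  rw [show (fun t => pd i vd (Function.update x i t)) =
      fun t => Polynomial.eval t (Polynomial.derivative (Polynomial.C (Kc i x) * Rp x i)) from
    funext fun t => by
      rw [pd_vd i (Function.update x i t), Function.update_self, Kc_update, Rp_update]]
  exact Polynomial.deriv _

lemma derivative_finset_prod {ι : Type*} [DecidableEq ι] (s : Finset ι) (f : ι → Polynomial ℝ) :
    Polynomial.derivative (∏ b ∈ s, f b) =
      ∑ b ∈ s, (∏ a ∈ s.erase b, f a) * Polynomial.derivative (f b) := by
  induction s using Finset.induction_on with
  | empty => simp
  | insert a s h ih =>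
    rw [Finset.prod_insert h, Polynomial.derivative_mul, ih, Finset.mul_sum,
      Finset.sum_insert h, Finset.erase_insert h, mul_comm (Polynomial.derivative (f a))]
    congr 1
    refine Finset.sum_congr rfl fun b hb => ?_
    rw [Finset.erase_insert_of_ne (show a ≠ b from fun hab => h (hab ▸ hb)),
      Finset.prod_insert (fun ha => h (Finset.mem_of_mem_erase ha)), mul_assoc]

lemma hD1 (i : Fin n) (x : Fin n → ℝ) :
    pd i vd x = Kc i x * ∑ k ∈ Finset.univ.erase i,
      ∏ j ∈ (Finset.univ.erase i).erase k, (x i - x j) := by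
  rw [pd_vd, Polynomial.derivative_C_mul, Polynomial.eval_mul, Polynomial.eval_C]
  congr 1
  unfold Rp
  rw [derivative_finset_prod]
  simp [Polynomial.eval_finset_sum, Polynomial.eval_prod]

lemma hD2 (i : Fin n) (x : Fin n → ℝ) :
    pd i (pd i vd) x = Kc i x * ∑ k ∈ Finset.univ.erase i,
      ∑ l ∈ ((Finset.univ.erase i).erase k),
        ∏ j ∈ (((Finset.univ.erase i).erase k).erase l), (x i - x j) := by
  rw [pd_pd_vd, Polynomial.derivative_C_mul, Polynomial.derivative_C_mul,
    Polynomial.eval_mul, Polynomial.eval_C]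
  congr 1
  unfold Rp
  rw [derivative_finset_prod, Polynomial.derivative_sum]
  simp only [Polynomial.derivative_sub, Polynomial.derivative_X, Polynomial.derivative_C,
    sub_zero, mul_one]
  rw [Polynomial.eval_finset_sum]
  refine Finset.sum_congr rfl fun k hk => ?_
  rw [derivative_finset_prod, Polynomial.eval_finset_sum]
  refine Finset.sum_congr rfl fun l hl => ?_
  simp [Polynomial.eval_prod]

lemma dense_ne (i k : Fin n) (hik : i ≠ k) : Dense {y : Fin n → ℝ | y i ≠ y k} := by
  intro y
  by_cases h : y i ≠ y k
  · exact subset_closure h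
  · push_neg at h
    refine mem_closure_of_tendsto (f := fun m : ℕ => Function.update y i (y i + 1 / (m + 1)))
      (b := Filter.atTop) ?_ ?_
    · rw [tendsto_pi_nhds]
      intro j
      by_cases hj : j = i
      · subst hj
        simp only [Function.update_self]
        have := tendsto_one_div_add_atTop_nhds_zero_nat (𝕜 := ℝ)
        have h2 := Filter.Tendsto.const_add (y j) this
        simpa using h2
      · simp only [Function.update_of_ne hj]
        exact tendsto_const_nhds
    · refine Filter.Eventually.of_forall fun m => ?_
      simp only [Set.mem_setOf_eq, Function.update_self,
        Function.update_of_ne (Ne.symm hik)]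
      rw [h]
      intro hc
      have : (1 : ℝ) / (m + 1) = 0 := by linarith
      have hm : (0:ℝ) < 1 / (m + 1) := by positivity
      linarith

lemma cont_Kc (i : Fin n) : Continuous (fun y : Fin n → ℝ => Kc i y) := by
  unfold Kc
  exact continuous_const.mul (continuous_finset_prod _ fun a _ =>
    continuous_finset_prod _ fun b _ => (continuous_apply a).sub (continuous_apply b))

/-- pair cancellation -/
lemma pair_cancel (i k : Fin n) (hik : i ≠ k) (x : Fin n → ℝ) :
    Kc i x * ∏ j ∈ (Finset.univ.erase i).erase k, (x i - x j) +
      Kc k x * ∏ j ∈ (Finset.univ.erase k).erase i, (x k - x j) = 0 := by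
  have hcont : Continuous (fun y : Fin n → ℝ =>
      Kc i y * ∏ j ∈ (Finset.univ.erase i).erase k, (y i - y j) +
      Kc k y * ∏ j ∈ (Finset.univ.erase k).erase i, (y k - y j)) := by
    refine Continuous.add (Continuous.mul (cont_Kc i) ?_) (Continuous.mul (cont_Kc k) ?_) <;>
      exact continuous_finset_prod _ fun j _ => (continuous_apply _).sub (continuous_apply j)
  suffices heq : (fun y : Fin n → ℝ =>
      Kc i y * ∏ j ∈ (Finset.univ.erase i).erase k, (y i - y j) +
      Kc k y * ∏ j ∈ (Finset.univ.erase k).erase i, (y k - y j)) = fun _ => (0:ℝ) by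
    exact congrFun heq x
  refine Continuous.ext_on (dense_ne i k hik) hcont continuous_const fun y hy => ?_
  show _ = (0:ℝ)
  have hne : y i - y k ≠ 0 := sub_ne_zero.mpr hy
  have h1 : Kc i y * ((y i - y k) * ∏ j ∈ (Finset.univ.erase i).erase k, (y i - y j)) = vd y := by
    rw [Finset.mul_prod_erase (Finset.univ.erase i) (fun j => y i - y j)
      (Finset.mem_erase.mpr ⟨Ne.symm hik, Finset.mem_univ k⟩)]
    exact (vd_eq_K i y).symm
  have h2 : Kc k y * ((y k - y i) * ∏ j ∈ (Finset.univ.erase k).erase i, (y k - y j)) = vd y := by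
    rw [Finset.mul_prod_erase (Finset.univ.erase k) (fun j => y k - y j)
      (Finset.mem_erase.mpr ⟨hik, Finset.mem_univ i⟩)]
    exact (vd_eq_K k y).symm
  have hz : (y i - y k) *
      (Kc i y * ∏ j ∈ (Finset.univ.erase i).erase k, (y i - y j) +
       Kc k y * ∏ j ∈ (Finset.univ.erase k).erase i, (y k - y j)) = 0 := by
    linear_combination h1 - h2
  have := mul_eq_zero.mp hz
  simpa [hne] using this

/-- triple cancellation -/
lemma triple_cancel (i k l : Fin n) (hik : i ≠ k) (hil : i ≠ l) (hkl : k ≠ l) (x : Fin n → ℝ) :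
    x i * Kc i x * ∏ j ∈ ((Finset.univ.erase i).erase k).erase l, (x i - x j) +
    x k * Kc k x * ∏ j ∈ ((Finset.univ.erase k).erase l).erase i, (x k - x j) +
    x l * Kc l x * ∏ j ∈ ((Finset.univ.erase l).erase i).erase k, (x l - x j) = 0 := by
  have hd : Dense ({y : Fin n → ℝ | y i ≠ y k} ∩
      ({y : Fin n → ℝ | y i ≠ y l} ∩ {y : Fin n → ℝ | y k ≠ y l})) := by
    refine Dense.inter_of_isOpen_left (dense_ne i k hik) ?_
      (isOpen_ne_fun (continuous_apply i) (continuous_apply k))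
    exact Dense.inter_of_isOpen_left (dense_ne i l hil)
      (dense_ne k l hkl) (isOpen_ne_fun (continuous_apply i) (continuous_apply l))
  have hcont : Continuous (fun y : Fin n → ℝ =>
      y i * Kc i y * ∏ j ∈ ((Finset.univ.erase i).erase k).erase l, (y i - y j) +
      y k * Kc k y * ∏ j ∈ ((Finset.univ.erase k).erase l).erase i, (y k - y j) +
      y l * Kc l y * ∏ j ∈ ((Finset.univ.erase l).erase i).erase k, (y l - y j)) := by
    refine Continuous.add (Continuous.add ?_ ?_) ?_ <;>
      refine Continuous.mul (Continuous.mul (continuous_apply _) (cont_Kc _)) ?_ <;>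
      exact continuous_finset_prod _ fun j _ => (continuous_apply _).sub (continuous_apply j)
  suffices heq : (fun y : Fin n → ℝ =>
      y i * Kc i y * ∏ j ∈ ((Finset.univ.erase i).erase k).erase l, (y i - y j) +
      y k * Kc k y * ∏ j ∈ ((Finset.univ.erase k).erase l).erase i, (y k - y j) +
      y l * Kc l y * ∏ j ∈ ((Finset.univ.erase l).erase i).erase k, (y l - y j)) = fun _ => (0:ℝ) by
    exact congrFun heq x
  refine Continuous.ext_on hd hcont continuous_const fun y hy => ?_
  show _ = (0:ℝ)
  obtain ⟨hy1, hy2, hy3⟩ := hy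
  have e1 : y i - y k ≠ 0 := sub_ne_zero.mpr hy1
  have e2 : y i - y l ≠ 0 := sub_ne_zero.mpr hy2
  have e3 : y k - y l ≠ 0 := sub_ne_zero.mpr hy3
  have h1 : Kc i y * ((y i - y k) * ((y i - y l) *
      ∏ j ∈ ((Finset.univ.erase i).erase k).erase l, (y i - y j))) = vd y := by
    rw [Finset.mul_prod_erase ((Finset.univ.erase i).erase k) (fun j => y i - y j)
      (Finset.mem_erase.mpr ⟨Ne.symm hkl, Finset.mem_erase.mpr ⟨Ne.symm hil, Finset.mem_univ l⟩⟩)]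
    rw [Finset.mul_prod_erase (Finset.univ.erase i) (fun j => y i - y j)
      (Finset.mem_erase.mpr ⟨Ne.symm hik, Finset.mem_univ k⟩)]
    exact (vd_eq_K i y).symm
  have h2 : Kc k y * ((y k - y l) * ((y k - y i) *
      ∏ j ∈ ((Finset.univ.erase k).erase l).erase i, (y k - y j))) = vd y := by
    rw [Finset.mul_prod_erase ((Finset.univ.erase k).erase l) (fun j => y k - y j)
      (Finset.mem_erase.mpr ⟨hil, Finset.mem_erase.mpr ⟨hik, Finset.mem_univ i⟩⟩)]
    rw [Finset.mul_prod_erase (Finset.univ.erase k) (fun j => y k - y j)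
      (Finset.mem_erase.mpr ⟨Ne.symm hkl, Finset.mem_univ l⟩)]
    exact (vd_eq_K k y).symm
  have h3 : Kc l y * ((y l - y i) * ((y l - y k) *
      ∏ j ∈ ((Finset.univ.erase l).erase i).erase k, (y l - y j))) = vd y := by
    rw [Finset.mul_prod_erase ((Finset.univ.erase l).erase i) (fun j => y l - y j)
      (Finset.mem_erase.mpr ⟨Ne.symm hik, Finset.mem_erase.mpr ⟨hkl, Finset.mem_univ k⟩⟩)]
    rw [Finset.mul_prod_erase (Finset.univ.erase l) (fun j => y l - y j)
      (Finset.mem_erase.mpr ⟨hil, Finset.mem_univ i⟩)]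
    exact (vd_eq_K l y).symm
  have hz : (y i - y k) * ((y i - y l) * ((y k - y l) *
      (y i * Kc i y * ∏ j ∈ ((Finset.univ.erase i).erase k).erase l, (y i - y j) +
       y k * Kc k y * ∏ j ∈ ((Finset.univ.erase k).erase l).erase i, (y k - y j) +
       y l * Kc l y * ∏ j ∈ ((Finset.univ.erase l).erase i).erase k, (y l - y j)))) = 0 := by
    linear_combination (y i * (y k - y l)) * h1 - (y k * (y i - y l)) * h2 +
      (y l * (y i - y k)) * h3
  simp only [Set.mem_setOf_eq, mul_eq_zero] at hz
  rcases hz with h | h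
  · exact absurd h e1
  rcases h with h | h
  · exact absurd h e2
  rcases h with h | h
  · exact absurd h e3
  · exact h

lemma sum_erase_eq (s : Finset (Fin n)) (a : Fin n) (f : Fin n → ℝ) :
    ∑ b ∈ s.erase a, f b = ∑ b ∈ s, if b ≠ a then f b else 0 := by
  rw [← Finset.filter_ne', Finset.sum_filter]

lemma sumPairZero (x : Fin n → ℝ) :
    ∑ i, ∑ k ∈ Finset.univ.erase i,
      (Kc i x * ∏ j ∈ (Finset.univ.erase i).erase k, (x i - x j)) = 0 := by
  set F : Fin n → Fin n → ℝ := fun i k =>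
    Kc i x * ∏ j ∈ (Finset.univ.erase i).erase k, (x i - x j) with hF
  have hswap : ∑ i, ∑ k ∈ Finset.univ.erase i, F k i
      = ∑ i, ∑ k ∈ Finset.univ.erase i, F i k := by
    rw [Finset.sum_comm' (s := Finset.univ) (t := fun i => Finset.univ.erase i)
      (t' := Finset.univ) (s' := fun k => Finset.univ.erase k) (fun a b => by
      simp only [Finset.mem_univ, true_and, and_true, Finset.mem_erase]
      exact ne_comm)]
  have h2 : ∑ i, ∑ k ∈ Finset.univ.erase i, (F i k + F k i) = 0 := by
    rw [Finset.sum_eq_zero]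
    intro i _
    rw [Finset.sum_eq_zero]
    intro k hk
    exact pair_cancel i k (Ne.symm (Finset.mem_erase.mp hk).1) x
  have h3 : ∑ i, ∑ k ∈ Finset.univ.erase i, (F i k + F k i)
      = ∑ i, ∑ k ∈ Finset.univ.erase i, F i k
        + ∑ i, ∑ k ∈ Finset.univ.erase i, F k i := by
    rw [← Finset.sum_add_distrib]
    exact Finset.sum_congr rfl fun i _ => Finset.sum_add_distrib
  rw [h3, hswap] at h2
  linarith

lemma sumTripleZero (x : Fin n → ℝ) :
    ∑ i, ∑ k ∈ Finset.univ.erase i, ∑ l ∈ (Finset.univ.erase i).erase k,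
      (x i * Kc i x * ∏ j ∈ ((Finset.univ.erase i).erase k).erase l, (x i - x j)) = 0 := by
  set G : Fin n → Fin n → Fin n → ℝ := fun i k l =>
    x i * Kc i x * ∏ j ∈ ((Finset.univ.erase i).erase k).erase l, (x i - x j) with hG
  set T : Finset (Fin n × Fin n × Fin n) :=
    Finset.univ.filter (fun t => t.2.1 ≠ t.1 ∧ t.2.2 ≠ t.1 ∧ t.2.2 ≠ t.2.1) with hT
  have step1 : (∑ t ∈ T, G t.1 t.2.1 t.2.2)
      = ∑ i, ∑ k ∈ Finset.univ.erase i, ∑ l ∈ (Finset.univ.erase i).erase k, G i k l := by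
    rw [hT, Finset.sum_filter, Fintype.sum_prod_type]
    refine Finset.sum_congr rfl fun i _ => ?_
    rw [Fintype.sum_prod_type]
    conv_rhs => rw [sum_erase_eq]
    refine Finset.sum_congr rfl fun k _ => ?_
    by_cases hk : k ≠ i
    · rw [if_pos hk]
      conv_rhs => rw [sum_erase_eq, sum_erase_eq]
      refine Finset.sum_congr rfl fun l _ => ?_
      by_cases hl1 : l ≠ i <;> by_cases hl2 : l ≠ k <;> simp [hk, hl1, hl2]
    · simp [hk]
  have hmemT : ∀ t ∈ T, t.2.1 ≠ t.1 ∧ t.2.2 ≠ t.1 ∧ t.2.2 ≠ t.2.1 := by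
    intro t ht
    rw [hT, Finset.mem_filter] at ht
    exact ht.2
  have hmemT' : ∀ t : Fin n × Fin n × Fin n,
      (t.2.1 ≠ t.1 ∧ t.2.2 ≠ t.1 ∧ t.2.2 ≠ t.2.1) → t ∈ T := by
    intro t ht
    rw [hT, Finset.mem_filter]
    exact ⟨Finset.mem_univ _, ht⟩
  have hc1 : ∑ t ∈ T, G t.1 t.2.1 t.2.2 = ∑ t ∈ T, G t.2.1 t.2.2 t.1 := by
    refine Finset.sum_nbij' (fun t => (t.2.2, t.1, t.2.1)) (fun t => (t.2.1, t.2.2, t.1))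
      ?_ ?_ ?_ ?_ ?_
    · intro t ht
      obtain ⟨h1, h2, h3⟩ := hmemT t ht
      exact hmemT' _ ⟨Ne.symm h2, Ne.symm h3, h1⟩
    · intro t ht
      obtain ⟨h1, h2, h3⟩ := hmemT t ht
      exact hmemT' _ ⟨h3, Ne.symm h1, Ne.symm h2⟩
    · intro t _; rfl
    · intro t _; rfl
    · intro t _; rfl
  have hc2 : ∑ t ∈ T, G t.1 t.2.1 t.2.2 = ∑ t ∈ T, G t.2.2 t.1 t.2.1 := by
    refine Finset.sum_nbij' (fun t => (t.2.1, t.2.2, t.1)) (fun t => (t.2.2, t.1, t.2.1))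
      ?_ ?_ ?_ ?_ ?_
    · intro t ht
      obtain ⟨h1, h2, h3⟩ := hmemT t ht
      exact hmemT' _ ⟨h3, Ne.symm h1, Ne.symm h2⟩
    · intro t ht
      obtain ⟨h1, h2, h3⟩ := hmemT t ht
      exact hmemT' _ ⟨Ne.symm h2, Ne.symm h3, h1⟩
    · intro t _; rfl
    · intro t _; rfl
    · intro t _; rfl
  have h3 : ∑ t ∈ T, (G t.1 t.2.1 t.2.2 + G t.2.1 t.2.2 t.1 + G t.2.2 t.1 t.2.1) = 0 := by
    rw [Finset.sum_eq_zero]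
    intro t ht
    obtain ⟨h1, h2, h3⟩ := hmemT t ht
    exact triple_cancel t.1 t.2.1 t.2.2 (Ne.symm h1) (Ne.symm h2) (Ne.symm h3) x
  rw [← step1]
  have h4 : ∑ t ∈ T, (G t.1 t.2.1 t.2.2 + G t.2.1 t.2.2 t.1 + G t.2.2 t.1 t.2.1)
      = ∑ t ∈ T, G t.1 t.2.1 t.2.2 + ∑ t ∈ T, G t.2.1 t.2.2 t.1
        + ∑ t ∈ T, G t.2.2 t.1 t.2.1 := by
    rw [← Finset.sum_add_distrib, ← Finset.sum_add_distrib]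
  rw [h4, ← hc1, ← hc2] at h3
  linarith

theorem squaredBessel_annihilates_vandermonde (n : ℕ) (hn : 1 ≤ n) (c : ℝ)
    (x : Fin n → ℝ) :
    ∑ i : Fin n, (2 * x i * pd i (pd i vd) x + c * pd i vd x) = 0 := by
  have hterm : ∀ i : Fin n, 2 * x i * pd i (pd i vd) x + c * pd i vd x =
      2 * (∑ k ∈ Finset.univ.erase i, ∑ l ∈ (Finset.univ.erase i).erase k,
        (x i * Kc i x * ∏ j ∈ ((Finset.univ.erase i).erase k).erase l, (x i - x j)))
      + c * (∑ k ∈ Finset.univ.erase i,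
        (Kc i x * ∏ j ∈ (Finset.univ.erase i).erase k, (x i - x j))) := by
    intro i
    rw [hD1, hD2]
    simp only [← Finset.mul_sum]
    ring
  calc ∑ i : Fin n, (2 * x i * pd i (pd i vd) x + c * pd i vd x)
      = ∑ i : Fin n, (2 * (∑ k ∈ Finset.univ.erase i, ∑ l ∈ (Finset.univ.erase i).erase k,
          (x i * Kc i x * ∏ j ∈ ((Finset.univ.erase i).erase k).erase l, (x i - x j)))
        + c * (∑ k ∈ Finset.univ.erase i,
          (Kc i x * ∏ j ∈ (Finset.univ.erase i).erase k, (x i - x j)))) :=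
        Finset.sum_congr rfl fun i _ => hterm i
    _ = 2 * (∑ i : Fin n, ∑ k ∈ Finset.univ.erase i, ∑ l ∈ (Finset.univ.erase i).erase k,
          (x i * Kc i x * ∏ j ∈ ((Finset.univ.erase i).erase k).erase l, (x i - x j)))
        + c * (∑ i : Fin n, ∑ k ∈ Finset.univ.erase i,
          (Kc i x * ∏ j ∈ (Finset.univ.erase i).erase k, (x i - x j))) := by
        rw [Finset.sum_add_distrib, ← Finset.mul_sum, ← Finset.mul_sum]
    _ = 0 := by rw [sumTripleZero, sumPairZero]; ring
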